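/- Let T_k be the tree consisting of a root v_0 with children v_{1,1},...,v_{1,g(k)} forming layer 1, where each layer-i vertex v_{i,j} (1 ≤ i ≤ k) has a unique child v_{i+1,j}, so that layers 1 through k+1 each have g(k) vertices arranged in g(k) paths hanging from the root's children; here g is defined by g(1)=2 and g(k) = ((k+1)/2)·(g(k-2)-1)+1 for odd k ≥ 3. Let G_k = T_k^[k] and let G_k' be obtained from G_k by completing both sides of its bipartition into cliques. Then box(G_k') > (k+1)/2. -/

import Mathlib

open SimpleGraph Set

/-- `f` given by endpoint functions `a`, `b` is an interval representation of `I`. -/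
def IsIntervalRep {V : Type*} (I : SimpleGraph V) (a b : V → ℝ) : Prop :=
  (∀ v, a v ≤ b v) ∧
    ∀ u v, I.Adj u v ↔ u ≠ v ∧ (Set.Icc (a u) (b u) ∩ Set.Icc (a v) (b v)).Nonempty

/-- `I` is an interval graph. -/
def IsIntervalGraph {V : Type*} (I : SimpleGraph V) : Prop :=
  ∃ a b : V → ℝ, IsIntervalRep I a b

/-- `G` is the intersection graph of axis-parallel `k`-dimensional boxes. -/
def IsBoxRep {V : Type*} (G : SimpleGraph V) (k : ℕ) : Prop :=
  ∃ lo hi : V → Fin k → ℝ, (∀ v i, lo v i ≤ hi v i) ∧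
    ∀ u v, G.Adj u v ↔ u ≠ v ∧
      ∀ i, (Set.Icc (lo u i) (hi u i) ∩ Set.Icc (lo v i) (hi v i)).Nonempty

/-- The boxicity of a graph: the least `k` such that `G` is an intersection graph of
axis-parallel `k`-dimensional boxes. -/
noncomputable def boxicity {V : Type*} (G : SimpleGraph V) : ℕ :=
  sInf {k | IsBoxRep G k}

/-- The `k`-th bipartite power of `G`: join vertices at odd distance at most `k`. -/
def bipartitePower {V : Type*} (G : SimpleGraph V) (k : ℕ) : SimpleGraph V :=
  SimpleGraph.fromRel (fun u v => Odd (G.dist u v) ∧ G.dist u v ≤ k)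

/-- Add to `G` all edges between distinct vertices of `B`. -/
def addCliqueOn {V : Type*} (G : SimpleGraph V) (B : Set V) : SimpleGraph V :=
  SimpleGraph.fromRel (fun u v => G.Adj u v ∨ (u ∈ B ∧ v ∈ B))

/-- `{A, B}` is a bipartition of `G`. -/
def IsBipartitionOf {V : Type*} (G : SimpleGraph V) (A B : Set V) : Prop :=
  Disjoint A B ∧ A ∪ B = Set.univ ∧ ∀ u v, G.Adj u v → (u ∈ A ↔ v ∈ B)

/-- `G` has no induced cycle of length greater than `m`. -/
def HasNoInducedCycleGT {V : Type*} (G : SimpleGraph V) (m : ℕ) : Prop :=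
  ∀ n : ℕ, m < n → IsEmpty (SimpleGraph.cycleGraph n ↪g G)

/-- Chordal bipartite graphs: bipartite with no induced cycle of length > 4. -/
def ChordalBipartite {V : Type*} (G : SimpleGraph V) : Prop :=
  (∃ A B : Set V, IsBipartitionOf G A B) ∧ HasNoInducedCycleGT G 4

/-- The closed neighbourhood `N[v]`. -/
def closedNbhd {V : Type*} (G : SimpleGraph V) (v : V) : Set V :=
  insert v (G.neighborSet v)

/-- Two vertices are compatible if one closed neighbourhood contains the other. -/
def Compatible {V : Type*} (G : SimpleGraph V) (u v : V) : Prop :=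
  closedNbhd G u ⊆ closedNbhd G v ∨ closedNbhd G v ⊆ closedNbhd G u

/-- A vertex is simple if all pairs in its closed neighbourhood are compatible. -/
def IsSimpleVertex {V : Type*} (G : SimpleGraph V) (v : V) : Prop :=
  ∀ x ∈ closedNbhd G v, ∀ y ∈ closedNbhd G v, Compatible G x y

/-- The function `g` with `g 1 = 2` and `g k = ((k+1)/2) * (g (k-2) - 1) + 1` for odd `k ≥ 3`. -/
def g : ℕ → ℕ
  | 0 => 1
  | 1 => 2
  | (n + 2) => ((n + 3) / 2) * (g n - 1) + 1

/-- Vertices of the tree `T_k`: the root `none`, and `some (i, j)` for the `j`-th vertex of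
layer `i + 1`, for `i < k + 1` and `j < g k`. -/
abbrev TkVert (k : ℕ) : Type := Option (Fin (k + 1) × Fin (g k))

/-- The tree `T_k`: the root is adjacent to all of layer 1, and `v_{i,j}` is adjacent to
`v_{i+1,j}`. -/
def Tk (k : ℕ) : SimpleGraph (TkVert k) :=
  SimpleGraph.fromRel (fun u v =>
    (∃ j, u = none ∧ v = some (0, j)) ∨
    (∃ (i i' : Fin (k + 1)) (j : Fin (g k)),
      (i' : ℕ) = (i : ℕ) + 1 ∧ u = some (i, j) ∧ v = some (i', j)))

/-- The side `A` of the bipartition of `T_k`: the vertices in odd-numbered layers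
(the root being in layer 0, and `some (i, j)` in layer `i + 1`). -/
def TkA (k : ℕ) : Set (TkVert k) :=
  {v | ∃ (i : Fin (k + 1)) (j : Fin (g k)), v = some (i, j) ∧ Even (i : ℕ)}

section AuxSection
open Finset

lemma c4aux {x1 x2 y1 y2 z1 z2 w1 w2 : ℝ}
    (hxy : x2 < y1)
    (hxz : (Icc x1 x2 ∩ Icc z1 z2).Nonempty)
    (hzy : (Icc z1 z2 ∩ Icc y1 y2).Nonempty)
    (hyw : (Icc y1 y2 ∩ Icc w1 w2).Nonempty)
    (hwx : (Icc w1 w2 ∩ Icc x1 x2).Nonempty)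
    (hzw : ¬ (Icc z1 z2 ∩ Icc w1 w2).Nonempty) : False := by
  obtain ⟨p, ⟨hp1, hp2⟩, ⟨hp3, hp4⟩⟩ := hxz
  obtain ⟨q, ⟨hq1, hq2⟩, ⟨hq3, hq4⟩⟩ := hzy
  obtain ⟨r, ⟨hr1, hr2⟩, ⟨hr3, hr4⟩⟩ := hyw
  obtain ⟨s, ⟨hs1, hs2⟩, ⟨hs3, hs4⟩⟩ := hwx
  exact hzw ⟨x2, ⟨by linarith, by linarith⟩, ⟨by linarith, by linarith⟩⟩

lemma c4 {x1 x2 y1 y2 z1 z2 w1 w2 : ℝ} (hx : x1 ≤ x2) (hy : y1 ≤ y2)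
    (hxz : (Icc x1 x2 ∩ Icc z1 z2).Nonempty)
    (hzy : (Icc z1 z2 ∩ Icc y1 y2).Nonempty)
    (hyw : (Icc y1 y2 ∩ Icc w1 w2).Nonempty)
    (hwx : (Icc w1 w2 ∩ Icc x1 x2).Nonempty)
    (hxy : ¬ (Icc x1 x2 ∩ Icc y1 y2).Nonempty)
    (hzw : ¬ (Icc z1 z2 ∩ Icc w1 w2).Nonempty) : False := by
  rcases lt_or_ge x2 y1 with h | h1
  · exact c4aux h hxz hzy hyw hwx hzw
  rcases lt_or_ge y2 x1 with h | h2
  · exact c4aux h hyw hwx hxz hzy (fun hne => hzw (Set.inter_comm _ _ ▸ hne))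
  · exact hxy ⟨max x1 y1, ⟨le_max_left _ _, max_le hx h1⟩, ⟨le_max_right _ _, max_le h2 hy⟩⟩


lemma core : ∀ (t : ℕ), 1 ≤ t → ∀ {ι P : Type} [DecidableEq ι] [DecidableEq P]
    (C : Finset ι) (S : Finset P) (R : ι → P → P → Prop) (θ : ι → P → ℕ),
    C.card ≤ t → Nat.factorial t < S.card →
    (∀ c i j, R c i j → ¬ R c j i) →
    (∀ i ∈ S, ∀ j ∈ S, i ≠ j → ∀ s < t, ∃ c ∈ C, R c i j ∧ θ c i ≤ s ∧ s ≤ θ c j) →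
    False := by
  intro t
  induction t with
  | zero => omega
  | succ t IH =>
    intro _ ι P _ _ C S R θ hC hS hasym hcov
    rcases Nat.eq_zero_or_pos t with ht0 | ht1
    · -- base case t+1 = 1
      subst ht0
      have h2 : 1 < S.card := by simpa [Nat.factorial] using hS
      obtain ⟨i, hi, j, hj, hij⟩ := Finset.one_lt_card.mp h2
      obtain ⟨c1, hc1C, hR1, -⟩ := hcov i hi j hj hij 0 (by omega)
      obtain ⟨c2, hc2C, hR2, -⟩ := hcov j hj i hi (Ne.symm hij) 0 (by omega)
      have : c1 = c2 := by
        have := Finset.card_le_one.mp hC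
        exact this c1 hc1C c2 hc2C
      exact hasym c1 i j hR1 (this ▸ hR2)
    · -- inductive step
      classical
      -- T c : elements with θ c j ≥ t
      set T : ι → Finset P := fun c => S.filter (fun j => t ≤ θ c j) with hT
      -- every j in S is in some T c
      have hmem : ∀ j ∈ S, ∃ c ∈ C, j ∈ T c := by
        intro j hj
        have h2 : 1 < S.card := lt_of_le_of_lt (Nat.one_le_iff_ne_zero.mpr
          (Nat.factorial_ne_zero _)) hS
        obtain ⟨a, ha, b, hb, hab⟩ := Finset.one_lt_card.mp h2
        have hex : ∃ i ∈ S, i ≠ j := by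
          rcases eq_or_ne a j with rfl | h
          · exact ⟨b, hb, fun hbj => hab hbj.symm⟩
          · exact ⟨a, ha, h⟩
        obtain ⟨i, hiS, hij⟩ := hex
        obtain ⟨c, hcC, -, -, hθj⟩ := hcov i hiS j hj hij t (by omega)
        exact ⟨c, hcC, Finset.mem_filter.mpr ⟨hj, hθj⟩⟩
      -- pigeonhole: some c* with T c* large
      have hbig : ∃ c ∈ C, Nat.factorial t < (T c).card := by
        by_contra hcon
        push_neg at hcon
        have hsub : S ⊆ C.biUnion T := by
          intro j hj
          obtain ⟨c, hc, hjc⟩ := hmem j hj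
          exact Finset.mem_biUnion.mpr ⟨c, hc, hjc⟩
        have h1 : S.card ≤ (C.biUnion T).card := Finset.card_le_card hsub
        have h2 : (C.biUnion T).card ≤ C.card * Nat.factorial t := by
          apply le_trans (Finset.card_biUnion_le)
          apply Finset.sum_le_card_nsmul
          intro c hc
          exact hcon c hc
        have : S.card ≤ (t+1) * Nat.factorial t := by
          calc S.card ≤ C.card * Nat.factorial t := le_trans h1 h2
          _ ≤ (t+1) * Nat.factorial t := Nat.mul_le_mul_right _ hC
        rw [← Nat.factorial_succ] at this
        omega
      obtain ⟨cs, hcsC, hTbig⟩ := hbig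
      refine IH ht1 (C.erase cs) (T cs) R θ ?_ hTbig hasym ?_
      · have := Finset.card_erase_of_mem hcsC
        omega
      · intro i hi j hj hij s hs
        have hiS : i ∈ S := (Finset.mem_filter.mp hi).1
        have hjS : j ∈ S := (Finset.mem_filter.mp hj).1
        have hθi : t ≤ θ cs i := (Finset.mem_filter.mp hi).2
        obtain ⟨c, hcC, hR, hθ1, hθ2⟩ := hcov i hiS j hjS hij s (by omega)
        refine ⟨c, Finset.mem_erase.mpr ⟨?_, hcC⟩, hR, hθ1, hθ2⟩
        rintro rfl
        omega

lemma gfact : ∀ t : ℕ, 1 ≤ t → g (2*t - 1) = Nat.factorial t + 1 := by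
  intro t
  induction t with
  | zero => omega
  | succ t IH =>
    intro _h
    rcases Nat.eq_zero_or_pos t with rfl | ht1
    · rfl
    · have h1 : 2*(t+1) - 1 = (2*t - 1) + 2 := by omega
      rw [h1]
      have h2 : g ((2*t-1) + 2) = (((2*t-1) + 3) / 2) * (g (2*t-1) - 1) + 1 := by
        rcases t with _ | t
        · omega
        · rfl
      rw [h2, IH ht1]
      have h3 : ((2*t-1) + 3)/2 = t + 1 := by omega
      rw [h3]
      simp [Nat.factorial_succ]

namespace Aux
variable {k : ℕ}

/-- depth: root 0, some (i,j) ↦ i+1 -/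
def ρ : TkVert k → ℕ := fun v => Option.casesOn v 0 (fun p => (p.1 : ℕ) + 1)

@[simp] lemma ρ_none : ρ (none : TkVert k) = 0 := rfl
@[simp] lemma ρ_some (i : Fin (k+1)) (j : Fin (g k)) : ρ (some (i, j)) = (i : ℕ) + 1 := rfl

def vtx (k : ℕ) (a : ℕ) (j : Fin (g k)) : TkVert k := some (⟨min a k, by omega⟩, j)

lemma vtx_eq (a : ℕ) (ha : a ≤ k) (j : Fin (g k)) :
    vtx k a j = some (⟨a, by omega⟩, j) := by
  simp [vtx, Nat.min_eq_left ha]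

lemma ρ_vtx (a : ℕ) (ha : a ≤ k) (j : Fin (g k)) : ρ (vtx k a j) = a + 1 := by
  rw [vtx_eq a ha]; simp

/-- adjacency changes depth by one -/
lemma adj_rho {x y : TkVert k} (h : (Tk k).Adj x y) : ρ x + 1 = ρ y ∨ ρ y + 1 = ρ x := by
  rw [Tk, SimpleGraph.fromRel_adj] at h
  rcases h.2 with (⟨j, rfl, rfl⟩ | ⟨i, i', j, hii, rfl, rfl⟩) | (⟨j, rfl, rfl⟩ | ⟨i, i', j, hii, rfl, rfl⟩)
  · left; simp
  · left; simp [hii]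
  · right; simp
  · right; simp [hii]

/-- adjacency between two `some`s preserves the path index -/
lemma adj_path {p q : Fin (k+1) × Fin (g k)} (h : (Tk k).Adj (some p) (some q)) :
    p.2 = q.2 := by
  rw [Tk, SimpleGraph.fromRel_adj] at h
  rcases h.2 with (⟨j, h1, h2⟩ | ⟨i, i', j, hii, h1, h2⟩) | (⟨j, h1, h2⟩ | ⟨i, i', j, hii, h1, h2⟩)
  · exact absurd h1 (by simp)
  · injection h1 with h1; injection h2 with h2; rw [h1, h2]
  · exact absurd h1 (by simp)
  · injection h1 with h1; injection h2 with h2; rw [h1, h2]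
end Aux
namespace Aux
variable {k : ℕ}

lemma tk_adj_root (j : Fin (g k)) : (Tk k).Adj none (vtx k 0 j) := by
  rw [vtx_eq 0 (by omega), Tk, SimpleGraph.fromRel_adj]
  refine ⟨by simp, Or.inl (Or.inl ⟨j, rfl, ?_⟩)⟩
  congr 1

lemma tk_adj_step (a : ℕ) (ha : a + 1 ≤ k) (j : Fin (g k)) :
    (Tk k).Adj (vtx k a j) (vtx k (a+1) j) := by
  rw [vtx_eq a (by omega), vtx_eq (a+1) ha, Tk, SimpleGraph.fromRel_adj]
  refine ⟨?_, Or.inl (Or.inr ⟨⟨a, by omega⟩, ⟨a+1, by omega⟩, j, by simp, rfl, rfl⟩)⟩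
  simp [Fin.ext_iff]

lemma exists_walk_root (a : ℕ) (ha : a ≤ k) (j : Fin (g k)) :
    ∃ p : (Tk k).Walk none (vtx k a j), p.length = a + 1 := by
  induction a with
  | zero => exact ⟨SimpleGraph.Walk.cons (tk_adj_root j) SimpleGraph.Walk.nil, rfl⟩
  | succ a IH =>
    obtain ⟨p, hp⟩ := IH (by omega)
    exact ⟨p.concat (tk_adj_step a ha j), by simp [SimpleGraph.Walk.length_concat, hp]⟩

lemma exists_walk_path (a d : ℕ) (had : a + d ≤ k) (j : Fin (g k)) :
    ∃ p : (Tk k).Walk (vtx k a j) (vtx k (a+d) j), p.length = d := by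
  induction d with
  | zero => exact ⟨SimpleGraph.Walk.nil, rfl⟩
  | succ d IH =>
    obtain ⟨p, hp⟩ := IH (by omega)
    exact ⟨p.concat (tk_adj_step (a+d) (by omega) j), by simp [SimpleGraph.Walk.length_concat, hp]⟩

lemma walk_parity {u v : TkVert k} (p : (Tk k).Walk u v) :
    (p.length + ρ u + ρ v) % 2 = 0 := by
  induction p with
  | nil => simp [Nat.add_mul_mod_self_left]; omega
  | cons h q IH =>
    rcases adj_rho h with h1 | h1 <;> simp [SimpleGraph.Walk.length_cons] <;> omega

lemma walk_lip {u v : TkVert k} (p : (Tk k).Walk u v) : ρ u ≤ ρ v + p.length := by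
  induction p with
  | nil => simp
  | cons h q IH =>
    rcases adj_rho h with h1 | h1 <;> simp [SimpleGraph.Walk.length_cons] <;> omega

lemma walk_lip' {u v : TkVert k} (p : (Tk k).Walk u v) : ρ v ≤ ρ u + p.length := by
  have := walk_lip p.reverse
  simpa using this

lemma walk_passes_none {u v : TkVert k} (p : (Tk k).Walk u v)
    (hnone : (none : TkVert k) ∉ p.support) :
    Option.map Prod.snd u = Option.map Prod.snd v := by
  induction p with
  | nil => rfl
  | cons h q IH =>
    rename_i a b c
    have hb : b ∈ (SimpleGraph.Walk.cons h q).support := by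
      simp [SimpleGraph.Walk.support_cons]
    have ha : a ∈ (SimpleGraph.Walk.cons h q).support := by
      simp [SimpleGraph.Walk.support_cons]
    have hbn : b ≠ none := by
      rintro rfl
      exact hnone (by simp [SimpleGraph.Walk.support_cons])
    have han : a ≠ none := by
      rintro rfl
      exact hnone (by simp [SimpleGraph.Walk.support_cons])
    have hq : (none : TkVert k) ∉ q.support := by
      intro hmem
      exact hnone (by simp [SimpleGraph.Walk.support_cons, hmem])
    obtain ⟨pa, rfl⟩ := Option.ne_none_iff_exists'.mp han
    obtain ⟨pb, rfl⟩ := Option.ne_none_iff_exists'.mp hbn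
    have := adj_path (k := k) h
    rw [← IH hq]
    simp [this]
end Aux

namespace Aux
variable {k : ℕ}

lemma reachable_from_root (v : TkVert k) : (Tk k).Reachable none v := by
  cases v with
  | none => exact SimpleGraph.Reachable.refl _
  | some p =>
    obtain ⟨i, j⟩ := p
    obtain ⟨q, -⟩ := exists_walk_root (k := k) (i : ℕ) (by omega) j
    have : vtx k (i : ℕ) j = some (i, j) := by
      rw [vtx_eq _ (by omega)]
    exact (this ▸ q).reachable

lemma reachable_all (u v : TkVert k) : (Tk k).Reachable u v :=
  ((reachable_from_root u).symm).trans (reachable_from_root v)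

lemma dist_le_sum (a b : ℕ) (ha : a ≤ k) (hb : b ≤ k) (i j : Fin (g k)) :
    (Tk k).dist (vtx k a i) (vtx k b j) ≤ a + b + 2 := by
  obtain ⟨p, hp⟩ := exists_walk_root a ha i
  obtain ⟨q, hq⟩ := exists_walk_root b hb j
  have := SimpleGraph.dist_le (p.reverse.append q)
  simp [hp, hq] at this
  omega

lemma dist_le_diff (a d : ℕ) (had : a + d ≤ k) (j : Fin (g k)) :
    (Tk k).dist (vtx k a j) (vtx k (a+d) j) ≤ d := by
  obtain ⟨p, hp⟩ := exists_walk_path a d had j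
  have := SimpleGraph.dist_le p
  omega

lemma walk_length_lb (a b : ℕ) (ha : a ≤ k) (hb : b ≤ k) (i j : Fin (g k)) (hij : i ≠ j)
    (p : (Tk k).Walk (vtx k a i) (vtx k b j)) : a + b + 2 ≤ p.length := by
  have hmem : (none : TkVert k) ∈ p.support := by
    by_contra hcon
    have := walk_passes_none p hcon
    rw [vtx_eq a ha, vtx_eq b hb] at this
    simp at this
    exact hij this
  have hsplit := p.take_spec hmem
  have hlen : (p.takeUntil none hmem).length + (p.dropUntil none hmem).length = p.length := by
    rw [← SimpleGraph.Walk.length_append, hsplit]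
  have h1 : ρ (vtx k a i) ≤ ρ (none : TkVert k) + (p.takeUntil none hmem).length :=
    walk_lip _
  have h2 : ρ (vtx k b j) ≤ ρ (none : TkVert k) + (p.dropUntil none hmem).length :=
    walk_lip' _
  rw [ρ_vtx a ha] at h1
  rw [ρ_vtx b hb] at h2
  simp [ρ_none] at h1 h2
  omega

lemma dist_lb (a b : ℕ) (ha : a ≤ k) (hb : b ≤ k) (i j : Fin (g k)) (hij : i ≠ j) :
    a + b + 2 ≤ (Tk k).dist (vtx k a i) (vtx k b j) := by
  obtain ⟨p, hp⟩ := (reachable_all (vtx k a i) (vtx k b j)).exists_walk_length_eq_dist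
  rw [← hp]
  exact walk_length_lb a b ha hb i j hij p

lemma dist_odd (a b : ℕ) (ha : a ≤ k) (hb : b ≤ k) (i j : Fin (g k))
    (hpar : (a + b) % 2 = 1) :
    Odd ((Tk k).dist (vtx k a i) (vtx k b j)) := by
  obtain ⟨p, hp⟩ := (reachable_all (vtx k a i) (vtx k b j)).exists_walk_length_eq_dist
  have := walk_parity p
  rw [hp, ρ_vtx a ha, ρ_vtx b hb] at this
  rw [Nat.odd_iff]
  omega
end Aux

namespace Aux
variable {k : ℕ}

abbrev GG (k : ℕ) : SimpleGraph (TkVert k) :=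
  addCliqueOn (addCliqueOn (bipartitePower (Tk k) k) (TkA k)) (TkA k)ᶜ

lemma mem_TkA_vtx (a : ℕ) (ha : a ≤ k) (hev : Even a) (j : Fin (g k)) :
    vtx k a j ∈ TkA k := by
  rw [vtx_eq a ha]
  exact ⟨⟨a, by omega⟩, j, rfl, by simpa using hev⟩

lemma not_mem_TkA_vtx (a : ℕ) (ha : a ≤ k) (hev : ¬ Even a) (j : Fin (g k)) :
    vtx k a j ∉ TkA k := by
  rw [vtx_eq a ha]
  rintro ⟨i, j', heq, hev'⟩
  injection heq with heq
  rw [Prod.ext_iff] at heq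
  have h1 : a = (i : ℕ) := by simpa [Fin.ext_iff] using heq.1
  exact hev (by rwa [← h1] at hev')

lemma vtx_ne_of_depth (a b : ℕ) (ha : a ≤ k) (hb : b ≤ k) (hab : a ≠ b)
    (i j : Fin (g k)) : vtx k a i ≠ vtx k b j := by
  rw [vtx_eq a ha, vtx_eq b hb]
  intro h
  injection h with h
  rw [Prod.ext_iff] at h
  have := h.1
  simp [Fin.ext_iff] at this
  omega

lemma vtx_ne_of_path (a b : ℕ) (hij : i ≠ j) :
    vtx k a i ≠ vtx k b j := by
  intro h
  injection h with h
  rw [Prod.ext_iff] at h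
  exact hij h.2

lemma adjA {u v : TkVert k} (hu : u ∈ TkA k) (hv : v ∈ TkA k) (hne : u ≠ v) :
    (GG k).Adj u v := by
  simp only [GG, addCliqueOn, bipartitePower, SimpleGraph.fromRel_adj]
  exact ⟨hne, Or.inl (Or.inl ⟨hne, Or.inl (Or.inr ⟨hu, hv⟩)⟩)⟩

lemma adjB {u v : TkVert k} (hu : u ∉ TkA k) (hv : v ∉ TkA k) (hne : u ≠ v) :
    (GG k).Adj u v := by
  simp only [GG, addCliqueOn, bipartitePower, SimpleGraph.fromRel_adj]
  exact ⟨hne, Or.inl (Or.inr ⟨hu, hv⟩)⟩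

lemma adjP {u v : TkVert k} (hne : u ≠ v) (hodd : Odd ((Tk k).dist u v))
    (hle : (Tk k).dist u v ≤ k) : (GG k).Adj u v := by
  simp only [GG, addCliqueOn, bipartitePower, SimpleGraph.fromRel_adj]
  exact ⟨hne, Or.inl (Or.inl ⟨hne, Or.inl (Or.inl ⟨hne, Or.inl ⟨hodd, hle⟩⟩)⟩)⟩

lemma nonadj {u v : TkVert k} (hu : u ∈ TkA k) (hv : v ∉ TkA k)
    (hd : ¬ ((Tk k).dist u v ≤ k)) : ¬ (GG k).Adj u v := by
  intro h
  simp only [GG, addCliqueOn, bipartitePower, SimpleGraph.fromRel_adj] at h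
  have hdist' : ¬ ((Tk k).dist v u ≤ k) := by
    rwa [SimpleGraph.dist_comm]
  rcases h.2 with (⟨-, h1⟩ | ⟨hu', -⟩) | (⟨-, h1⟩ | ⟨-, hu'⟩)
  · rcases h1 with (⟨-, h2⟩ | ⟨-, hv'⟩) | (⟨-, h2⟩ | ⟨hv', -⟩)
    · rcases h2 with ⟨-, h3⟩ | ⟨-, h3⟩
      · exact hd h3
      · exact hdist' h3
    · exact hv hv'
    · rcases h2 with ⟨-, h3⟩ | ⟨-, h3⟩
      · exact hdist' h3
      · exact hd h3
    · exact hv hv'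
  · exact hu' hu
  · rcases h1 with (⟨-, h2⟩ | ⟨hv', -⟩) | (⟨-, h2⟩ | ⟨-, hv'⟩)
    · rcases h2 with ⟨-, h3⟩ | ⟨-, h3⟩
      · exact hdist' h3
      · exact hd h3
    · exact hv hv'
    · rcases h2 with ⟨-, h3⟩ | ⟨-, h3⟩
      · exact hd h3
      · exact hdist' h3
    · exact hv hv'
  · exact hu' hu

end Aux

lemma exists_boxRep {V : Type*} [Fintype V] [DecidableEq V] (G : SimpleGraph V) :
    ∃ d, IsBoxRep G d := by
  classical
  set d := Fintype.card (V × V) with hd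
  set e : Fin d ≃ V × V := (Fintype.equivFin (V × V)).symm with he
  set P : Fin d → Prop := fun c => ¬ G.Adj (e c).1 (e c).2 ∧ (e c).1 ≠ (e c).2 with hP
  set L : V → Fin d → ℝ :=
    fun v c => if v = (e c).1 ∧ P c then (0:ℝ) else if v = (e c).2 ∧ P c then 2 else 0 with hL
  set H : V → Fin d → ℝ :=
    fun v c => if v = (e c).1 ∧ P c then (1:ℝ) else if v = (e c).2 ∧ P c then 3 else 3 with hH
  have hLH : ∀ v c, L v c ≤ H v c := by
    intro v c
    simp only [hL, hH]
    split_ifs <;> norm_num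
  refine ⟨d, L, H, hLH, ?_⟩
  intro u v
  constructor
  · intro hadj
    refine ⟨G.ne_of_adj hadj, fun c => ?_⟩
    rw [Set.Icc_inter_Icc, Set.nonempty_Icc]
    simp only [hL, hH, le_min_iff, max_le_iff]
    have hL02 : ∀ w, (if w = (e c).1 ∧ P c then (0:ℝ) else if w = (e c).2 ∧ P c then 2 else 0) = 0
        ∨ ((if w = (e c).1 ∧ P c then (0:ℝ) else if w = (e c).2 ∧ P c then 2 else 0) = 2
           ∧ w = (e c).2 ∧ P c) := by
      intro w
      split_ifs with h1 h2
      · exact Or.inl rfl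
      · exact Or.inr ⟨rfl, h2⟩
      · exact Or.inl rfl
    have hH13 : ∀ w, ((if w = (e c).1 ∧ P c then (1:ℝ) else if w = (e c).2 ∧ P c then 3 else 3) = 1
        ∧ w = (e c).1 ∧ P c)
        ∨ (if w = (e c).1 ∧ P c then (1:ℝ) else if w = (e c).2 ∧ P c then 3 else 3) = 3 := by
      intro w
      split_ifs with h1 h2
      · exact Or.inl ⟨rfl, h1⟩
      · exact Or.inr rfl
      · exact Or.inr rfl
    have hPdef : ∀ c', P c' → ¬ G.Adj (e c').1 (e c').2 ∧ (e c').1 ≠ (e c').2 := by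
      intro c' hc'
      simpa [hP] using hc'
    refine ⟨⟨?_, ?_⟩, ?_, ?_⟩
    · exact hLH u c
    · rcases hL02 v with h | ⟨h, hv2⟩
      · rcases hH13 u with ⟨h', -⟩ | h' <;> rw [h, h'] <;> norm_num
      · rcases hH13 u with ⟨h', hu1⟩ | h'
        · exact absurd (hu1.1 ▸ hv2.1 ▸ hadj) (hPdef c hv2.2).1
        · rw [h, h']; norm_num
    · rcases hL02 u with h | ⟨h, hu2⟩
      · rcases hH13 v with ⟨h', -⟩ | h' <;> rw [h, h'] <;> norm_num
      · rcases hH13 v with ⟨h', hv1⟩ | h'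
        · exact absurd (hv1.1 ▸ hu2.1 ▸ G.adj_symm hadj) (hPdef c hu2.2).1
        · rw [h, h']; norm_num
    · exact hLH v c
  · rintro ⟨hne, hall⟩
    by_contra hnadj
    have hc := hall (e.symm (u, v))
    have he1 : (e (e.symm (u, v))).1 = u := by simp
    have he2 : (e (e.symm (u, v))).2 = v := by simp
    have hPc : P (e.symm (u, v)) := by
      rw [hP]
      exact ⟨by rw [he1, he2]; exact hnadj, by rw [he1, he2]; exact hne⟩
    obtain ⟨z, hz1, hz2⟩ := hc
    simp only [hL, hH] at hz1 hz2
    rw [if_pos ⟨he1.symm, hPc⟩, if_pos ⟨he1.symm, hPc⟩] at hz1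
    have hv1 : ¬ (v = (e (e.symm (u,v))).1 ∧ P (e.symm (u,v))) := by
      rw [he1]
      exact fun h => hne h.1.symm
    rw [if_neg hv1, if_pos ⟨he2.symm, hPc⟩, if_neg hv1, if_pos ⟨he2.symm, hPc⟩] at hz2
    rw [Set.mem_Icc] at hz1 hz2
    linarith [hz1.2, hz2.1]

end AuxSection

namespace Aux

lemma no_small_boxrep (k t : ℕ) (hkt : k = 2*t - 1) (ht1 : 1 ≤ t) (d : ℕ) (hdt : d ≤ t)
    (hrep : IsBoxRep (GG k) d) : False := by
  classical
  obtain ⟨lo, hi, hlohi, hadj⟩ := hrep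
  set U : ℕ → Fin (g k) → TkVert k := fun s i => vtx k (2*t - 2 - 2*s) i with hU
  set W : ℕ → Fin (g k) → TkVert k := fun s j => vtx k (2*s + 1) j with hW
  set kill : Fin d → ℕ → Fin (g k) → Fin (g k) → Prop := fun c s i j =>
    s < t ∧ i ≠ j ∧
      ¬ (Set.Icc (lo (U s i) c) (hi (U s i) c) ∩ Set.Icc (lo (W s j) c) (hi (W s j) c)).Nonempty
    with hkill
  have hedge : ∀ u v, (GG k).Adj u v →
      ∀ c, (Set.Icc (lo u c) (hi u c) ∩ Set.Icc (lo v c) (hi v c)).Nonempty :=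
    fun u v h c => ((hadj u v).mp h).2 c
  -- adjacency facts
  have hAle : ∀ s, 2*t - 2 - 2*s ≤ k := by intro s; omega
  have hBle : ∀ s, s < t → 2*s + 1 ≤ k := by intro s hs; omega
  have adjUU : ∀ s s' : ℕ, ∀ i j : Fin (g k), i ≠ j → (GG k).Adj (U s i) (U s' j) := by
    intro s s' i j hij
    exact adjA (mem_TkA_vtx _ (hAle s) ⟨t - 1 - s, by omega⟩ i)
      (mem_TkA_vtx _ (hAle s') ⟨t - 1 - s', by omega⟩ j) (vtx_ne_of_path _ _ hij)
  have adjWW : ∀ s s' : ℕ, s < t → s' < t → ∀ i j : Fin (g k), i ≠ j →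
      (GG k).Adj (W s i) (W s' j) := by
    intro s s' hs hs' i j hij
    refine adjB (not_mem_TkA_vtx _ (hBle s hs) ?_ i)
      (not_mem_TkA_vtx _ (hBle s' hs') ?_ j) (vtx_ne_of_path _ _ hij)
    · intro hh; rw [Nat.even_iff] at hh; omega
    · intro hh; rw [Nat.even_iff] at hh; omega
  have distUW : ∀ a b : ℕ, a ≤ k → b ≤ k → ∀ j : Fin (g k),
      (Tk k).dist (vtx k a j) (vtx k b j) ≤ max a b - min a b := by
    intro a b ha hb j
    rcases le_total a b with hab | hab
    · have h1 := dist_le_diff (k := k) a (b - a) (by omega) j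
      have h2 : a + (b - a) = b := by omega
      rw [h2] at h1
      have h3 : max a b - min a b = b - a := by omega
      omega
    · have h1 := dist_le_diff (k := k) b (a - b) (by omega) j
      have h2 : b + (a - b) = a := by omega
      rw [h2] at h1
      have h3 : max a b - min a b = a - b := by omega
      rw [SimpleGraph.dist_comm]
      omega
  have adjUW_same : ∀ s s' : ℕ, s < t → s' < t → ∀ j : Fin (g k),
      (GG k).Adj (U s j) (W s' j) := by
    intro s s' hs hs' j
    apply adjP (vtx_ne_of_depth _ _ (hAle s) (hBle s' hs') (by omega) j j)
    · apply dist_odd _ _ (hAle s) (hBle s' hs')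
      omega
    · have := distUW (2*t - 2 - 2*s) (2*s' + 1) (hAle s) (hBle s' hs') j
      omega
  have adjUW_cross : ∀ s s' : ℕ, s < s' → s' < t → ∀ h j : Fin (g k),
      (GG k).Adj (U s' h) (W s j) := by
    intro s s' hss hs' h j
    apply adjP (vtx_ne_of_depth _ _ (hAle s') (hBle s (by omega)) (by omega) h j)
    · apply dist_odd _ _ (hAle s') (hBle s (by omega))
      omega
    · have := dist_le_sum (k := k) (2*t - 2 - 2*s') (2*s + 1) (hAle s') (hBle s (by omega)) h j
      omega
  have nonadjUW : ∀ s : ℕ, s < t → ∀ i j : Fin (g k), i ≠ j →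
      ¬ (GG k).Adj (U s i) (W s j) := by
    intro s hs i j hij
    apply nonadj (mem_TkA_vtx _ (hAle s) ⟨t - 1 - s, by omega⟩ i)
      (not_mem_TkA_vtx _ (hBle s hs) (by intro hh; rw [Nat.even_iff] at hh; omega) j)
    have := dist_lb (k := k) _ _ (hAle s) (hBle s hs) i j hij
    omega
  -- asymmetry
  have hasym : ∀ (c : Fin d) (s s' : ℕ) (i j : Fin (g k)),
      kill c s i j → kill c s' j i → False := by
    intro c s s' i j hk1 hk2
    obtain ⟨hs, hij, h1⟩ := hk1
    obtain ⟨hs', hji, h2⟩ := hk2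
    exact c4 (hlohi (U s i) c) (hlohi (W s j) c)
      (hedge _ _ (adjUU s s' i j hij) c)
      (hedge _ _ (adjUW_same s' s hs' hs j) c)
      (hedge _ _ (adjWW s s' hs hs' j i hji) c)
      (hedge _ _ ((adjUW_same s s' hs hs' i).symm) c)
      h1 h2
  -- monotonicity
  have hmono : ∀ (c : Fin d) (s' s : ℕ) (h i j : Fin (g k)),
      kill c s' h i → kill c s i j → s' ≤ s := by
    intro c s' s h i j hk1 hk2
    by_contra hcon
    push_neg at hcon
    obtain ⟨hs', hhi, h1⟩ := hk1
    obtain ⟨hs, hij, h2⟩ := hk2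
    exact c4 (hlohi (U s' h) c) (hlohi (W s' i) c)
      (hedge _ _ (adjUU s' s h i hhi) c)
      (hedge _ _ (adjUW_same s s' hs hs' i) c)
      (hedge _ _ (adjWW s' s hs' hs i j hij) c)
      (hedge _ _ ((adjUW_cross s s' hcon hs' h j).symm) c)
      h1 h2
  -- theta
  set θ : Fin d → Fin (g k) → ℕ :=
    fun c j => (Finset.range t).sup (fun s => if ∃ i, kill c s i j then s else 0) with hθ
  have θ_ge : ∀ (c : Fin d) (s : ℕ) (i j : Fin (g k)), kill c s i j → s ≤ θ c j := by
    intro c s i j hkij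
    have hle := Finset.le_sup (f := fun s => if ∃ i, kill c s i j then s else 0)
      (Finset.mem_range.mpr hkij.1)
    have hle' : (if ∃ i', kill c s i' j then s else 0) ≤ θ c j := hle
    rwa [if_pos ⟨i, hkij⟩] at hle'
  have θ_le : ∀ (c : Fin d) (s : ℕ) (i j : Fin (g k)), kill c s i j → θ c i ≤ s := by
    intro c s i j hkij
    apply Finset.sup_le
    intro s' _
    split_ifs with hex
    · obtain ⟨h, hk'⟩ := hex
      exact hmono c s' s h i j hk' hkij
    · omega
  -- coverage
  have hcov : ∀ i j : Fin (g k), i ≠ j → ∀ s, s < t → ∃ c, kill c s i j := by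
    intro i j hij s hs
    by_contra hcon
    push_neg at hcon
    have hne : U s i ≠ W s j :=
      vtx_ne_of_depth _ _ (hAle s) (hBle s hs) (by omega) i j
    apply nonadjUW s hs i j hij
    apply (hadj (U s i) (W s j)).mpr
    refine ⟨hne, fun c => ?_⟩
    have := hcon c
    rw [hkill] at this
    simp only [not_and, not_not] at this
    exact this hs hij
  -- apply core
  have hcard : Nat.factorial t < (Finset.univ : Finset (Fin (g k))).card := by
    rw [Finset.card_univ, Fintype.card_fin]
    have := gfact t ht1
    rw [← hkt] at this
    omega
  refine core t ht1 (Finset.univ : Finset (Fin d)) (Finset.univ : Finset (Fin (g k)))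
    (fun c i j => ∃ s, kill c s i j) θ ?_ hcard ?_ ?_
  · rw [Finset.card_univ, Fintype.card_fin]
    exact hdt
  · rintro c i j ⟨s, hk1⟩ ⟨s', hk2⟩
    exact hasym c s s' i j hk1 hk2
  · intro i _ j _ hij s hs
    obtain ⟨c, hc⟩ := hcov i j hij s hs
    exact ⟨c, Finset.mem_univ c, ⟨s, hc⟩, θ_le c s i j hc, θ_ge c s i j hc⟩

end Aux

theorem stmt9 (k : ℕ) (hk : Odd k) :
    (k + 1) / 2 <
      boxicity (addCliqueOn (addCliqueOn (bipartitePower (Tk k) k) (TkA k)) (TkA k)ᶜ) := by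
  classical
  obtain ⟨m, hm⟩ := hk
  have ht1 : 1 ≤ (k + 1) / 2 := by omega
  have hkt : k = 2 * ((k + 1) / 2) - 1 := by omega
  obtain ⟨d0, hd0⟩ := exists_boxRep (Aux.GG k)
  have hne : {d | IsBoxRep (Aux.GG k) d}.Nonempty := ⟨d0, hd0⟩
  have hall : ∀ d ∈ {d | IsBoxRep (Aux.GG k) d}, (k + 1) / 2 < d := by
    intro d hd
    by_contra hcon
    push_neg at hcon
    exact Aux.no_small_boxrep k ((k + 1) / 2) hkt ht1 d hcon hd
  have hmem := Nat.sInf_mem hne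
  exact hall _ hmem
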